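/- arXiv:2505.12918 — 2 statements merged into one kernel-verified Lean document; each statement's English description precedes it below -/
import Mathlib

section
/- Let z ∈ N with z ∉ N', and let α be an IA-automorphism of N such that α² = τ_z. Then α is an inner automorphism of N: there exists u ∈ N with α = τ_u. -/
/-!
Setting: `X` is an infinite set, `F` the free group on `X`, and
`N X = F/γ₃(F)` the free nilpotent group of class two on `X`.
-/

namespace FreeNilp

/-- The free nilpotent group of class two on `X`:  `F/γ₃(F)`, where
`γ₃(F) = [[F,F],F]` is the third term of the lower central series of `F`. -/
abbrev N (X : Type*) := FreeGroup X ⧸ Subgroup.lowerCentralSeries (⊤ : Subgroup (FreeGroup X)) 2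

/-- The image in `N X` of the generator `x ∈ X`. -/
def xb {X : Type*} (x : X) : N X := QuotientGroup.mk (FreeGroup.of x)

/-- The group of inner automorphisms `Inn G`, as a subgroup of `MulAut G`;
`MulAut.conj z` is the inner automorphism `τ_z : a ↦ z a z⁻¹`. -/
def Inn (G : Type*) [Group G] : Subgroup (MulAut G) := (MulAut.conj (G := G)).range

instance Inn.normal (G : Type*) [Group G] : (Inn G).Normal := by
  constructor
  rintro m ⟨z, rfl⟩ g
  refine ⟨g z, ?_⟩
  ext a
  simp [MulAut.conj_apply, map_mul, map_inv, mul_assoc]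

/-- The outer automorphism group `Out G = Aut G / Inn G`. -/
abbrev Out (G : Type*) [Group G] := MulAut G ⧸ Inn G

/-- The quotient homomorphism `ĥ : Aut G → Out G`. -/
def hhat (G : Type*) [Group G] : MulAut G →* Out G := QuotientGroup.mk' (Inn G)

/-- IA-automorphisms: automorphisms inducing the identity on the abelianization. -/
def IA {G : Type*} [Group G] (α : MulAut G) : Prop :=
  ∀ g : G, Abelianization.of (α g) = Abelianization.of g

/-- A-symmetries in `Aut G`: automorphisms inducing the inversion automorphism
`-id : a ↦ a⁻¹` of the abelianization. -/
def ASym {G : Type*} [Group G] (θ : MulAut G) : Prop :=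
  ∀ g : G, Abelianization.of (θ g) = (Abelianization.of g)⁻¹

/-- A-symmetries in `Out G`: elements induced by A-symmetries of `Aut G`
(equivalently, inducing inversion on the abelianization). -/
def ASymO {G : Type*} [Group G] (t : Out G) : Prop :=
  ∃ θ : MulAut G, hhat G θ = t ∧ ASym θ

/-- The endomorphism of the abelianization induced by an automorphism of `G`. -/
def abMap {G : Type*} [Group G] (σ : MulAut G) : Abelianization G →* Abelianization G :=
  Abelianization.map σ.toMonoidHom

/-- `S` is a free generating set (a "ℤ-basis", written multiplicatively) of the abelian
group `H`:  `S` generates `H`, and every `ℤ`-valued function on `S` extends to a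
homomorphism `H → ℤ` (the universal property of a free abelian group with basis `S`). -/
def IsFreeAbelianBasisOf {G : Type*} [Group G] (S : Set G) (H : Subgroup G) : Prop :=
  Subgroup.closure S = H ∧
    ∀ g : G → ℤ, ∃ φ : H →* Multiplicative ℤ,
      ∀ s, s ∈ S → ∀ h : s ∈ H, φ ⟨s, h⟩ = Multiplicative.ofAdd (g s)

/-- `σ : Aut (N X)` induces an extremal involution of the abelianization `A`:
for some free generating set `{a} ∪ C` of `A` the induced map sends `a` to `a⁻¹`
and fixes `C` pointwise. -/
def AExtremal {G : Type*} [Group G] (σ : MulAut G) : Prop :=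
  ∃ (a : Abelianization G) (C : Set (Abelianization G)),
    a ∉ C ∧ IsFreeAbelianBasisOf (insert a C) ⊤ ∧
      abMap σ a = a⁻¹ ∧ ∀ c ∈ C, abMap σ c = c

/-- A basis (free generating set) of `N X`: the image of the canonical generating set
`{x̄ : x ∈ X}` under an automorphism of `N X`. -/
def IsBasisN {X : Type*} (B : Set (N X)) : Prop :=
  ∃ e : MulAut (N X), B = ⇑e '' Set.range (xb : X → N X)

/-- Extremal involutions in `Aut (N X)`: automorphisms inverting one element of some
basis of `N X` and fixing all the other elements of that basis. -/
def IsExtremalAut {X : Type*} (ψ : MulAut (N X)) : Prop :=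
  ∃ B : Set (N X), IsBasisN B ∧
    ∃ b₀ ∈ B, ψ b₀ = b₀⁻¹ ∧ ∀ b ∈ B, b ≠ b₀ → ψ b = b

/-- The subgroup `G_b = {s ∈ Out (N X) : s̄(b̄N') = b̄N'}` of `Out (N X)`, as a set:
outer automorphisms whose induced automorphism of the abelianization fixes the image
of the generator `b`. -/
def Gb {X : Type*} (b : X) : Set (Out (N X)) :=
  {s | ∀ σ : MulAut (N X), hhat (N X) σ = s →
    Abelianization.of (σ (xb b)) = Abelianization.of (xb b)}

end FreeNilp

open FreeNilp
open scoped commutatorElement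

namespace Stmt2Aux
open Subgroup FreeNilp

variable {X : Type*} [LinearOrder X]

lemma comm_central (q : N X) (hq : q ∈ commutator (N X)) (g : N X) : Commute q g := by
  have key : ∀ a b c : N X, ⁅⁅a,b⁆,c⁆ = 1 := by
    intro a b c
    obtain ⟨A, rfl⟩ := QuotientGroup.mk_surjective (s := Subgroup.lowerCentralSeries (⊤ : Subgroup (FreeGroup X)) 2) a
    obtain ⟨B, rfl⟩ := QuotientGroup.mk_surjective (s := Subgroup.lowerCentralSeries (⊤ : Subgroup (FreeGroup X)) 2) b
    obtain ⟨C, rfl⟩ := QuotientGroup.mk_surjective (s := Subgroup.lowerCentralSeries (⊤ : Subgroup (FreeGroup X)) 2) c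
    have : ⁅⁅A,B⁆,C⁆ ∈ Subgroup.lowerCentralSeries (⊤ : Subgroup (FreeGroup X)) 2 := by
      rw [show (2:ℕ) = 1 + 1 from rfl, Subgroup.lowerCentralSeries_succ]
      apply Subgroup.subset_closure
      exact ⟨⁅A,B⁆, by
        rw [Subgroup.lowerCentralSeries_succ]
        apply Subgroup.subset_closure
        exact ⟨A, mem_top _, B, mem_top _, rfl⟩, C, mem_top _, rfl⟩
    have := (QuotientGroup.eq_one_iff _).mpr this
    exact this
  rw [commutator_eq_closure] at hq
  induction hq using Subgroup.closure_induction with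
  | mem q hq =>
      obtain ⟨a, b, rfl⟩ := hq
      have := key a b g
      rwa [commutatorElement_eq_one_iff_commute] at this
  | one => exact Commute.one_left g
  | mul a b _ _ ha hb => exact ha.mul_left hb
  | inv a _ ha => exact ha.inv_left

noncomputable def Bmap : (X →₀ ℤ) →ₗ[ℤ] (X →₀ ℤ) →ₗ[ℤ] ((X × X) →₀ ℤ) :=
  Finsupp.lsum ℤ fun x => LinearMap.toSpanSingleton ℤ _
    (Finsupp.lsum ℤ fun y => LinearMap.toSpanSingleton ℤ ((X × X) →₀ ℤ)
      (if x < y then Finsupp.single (x,y) 1 else 0))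

lemma Bmap_single_single (x y : X) :
    Bmap (Finsupp.single x 1) (Finsupp.single y 1) =
      if x < y then Finsupp.single (x,y) (1:ℤ) else 0 := by
  simp [Bmap]

structure MM (X : Type*) [LinearOrder X] where
  a : X →₀ ℤ
  s : (X × X) →₀ ℤ

@[ext] lemma MM.ext' {m n : MM X} (h1 : m.a = n.a) (h2 : m.s = n.s) : m = n := by
  cases m; cases n; simp_all

noncomputable instance : Group (MM X) where
  mul m n := ⟨m.a + n.a, m.s + n.s + Bmap m.a n.a⟩
  one := ⟨0, 0⟩
  inv m := ⟨-m.a, -m.s + Bmap m.a m.a⟩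
  mul_assoc m n k := by
    ext : 1 <;> simp [HMul.hMul, Mul.mul] <;> [skip; module] <;> abel
  one_mul m := by
    show MM.mk ((0:X→₀ℤ) + m.a) ((0:(X×X)→₀ℤ) + m.s + Bmap 0 m.a) = m
    ext : 1 <;> simp
  mul_one m := by
    show MM.mk (m.a + (0:X→₀ℤ)) (m.s + (0:(X×X)→₀ℤ) + Bmap m.a 0) = m
    ext : 1 <;> simp
  inv_mul_cancel m := by
    show MM.mk (-m.a + m.a) ((-m.s + Bmap m.a m.a) + m.s + Bmap (-m.a) m.a) = ⟨0,0⟩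
    ext : 1 <;> simp <;> abel

lemma MM.mul_def (m n : MM X) : m * n = ⟨m.a + n.a, m.s + n.s + Bmap m.a n.a⟩ := rfl
lemma MM.one_def : (1 : MM X) = ⟨0, 0⟩ := rfl
lemma MM.inv_def (m : MM X) : m⁻¹ = ⟨-m.a, -m.s + Bmap m.a m.a⟩ := rfl

lemma MM.comm_def (m n : MM X) : ⁅m, n⁆ = ⟨0, Bmap m.a n.a - Bmap n.a m.a⟩ := by
  rw [commutatorElement_def]
  simp only [MM.mul_def, MM.inv_def]
  ext : 1 <;> simp <;> module

lemma Bmap_apply_apply (a b : X →₀ ℤ) (p q : X) :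
    Bmap a b (p,q) = if p < q then a p * b q else 0 := by
  induction a using Finsupp.induction_linear with
  | zero => simp
  | add a a' ha ha' =>
      simp only [map_add, LinearMap.add_apply, Finsupp.add_apply, ha, ha']
      split <;> ring
  | single x n =>
      induction b using Finsupp.induction_linear with
      | zero => simp
      | add b b' hb hb' =>
          simp only [map_add, Finsupp.add_apply, hb, hb']
          split <;> ring
      | single y m =>
          simp only [Bmap, Finsupp.lsum_single, LinearMap.toSpanSingleton_apply,
            LinearMap.smul_apply, Finsupp.smul_apply]
          simp only [Finsupp.smul_apply, apply_ite (fun f : (X×X)→₀ℤ => f (p,q)),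
            Finsupp.single_apply, Finsupp.coe_zero, Pi.zero_apply, smul_eq_mul]
          split_ifs <;> simp_all [Prod.ext_iff] <;>
            exact absurd ‹p < q› (not_lt.mpr ‹q ≤ p›)

lemma MM.a_eq_zero_central (m : MM X) (h : m.a = 0) : m ∈ Subgroup.center (MM X) := by
  rw [Subgroup.mem_center_iff]
  intro g
  rw [MM.mul_def, MM.mul_def, h]
  ext : 1 <;> simp [add_comm]

lemma MM.lcs2 : Subgroup.lowerCentralSeries (⊤ : Subgroup (MM X)) 2 = ⊥ := by
  apply Subgroup.lowerCentralSeries_succ_eq_bot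
  have h1 : Subgroup.lowerCentralSeries (⊤ : Subgroup (MM X)) 1 = commutator (MM X) := by
    simp [commutator_def, Subgroup.top_lowerCentralSeries_one]
  rw [h1, commutator_eq_closure, Subgroup.closure_le]
  rintro g ⟨m, n, rfl⟩
  exact MM.a_eq_zero_central _ (by rw [MM.comm_def])

noncomputable def ThF : FreeGroup X →* MM X :=
  FreeGroup.lift fun x => (⟨Finsupp.single x 1, 0⟩ : MM X)

lemma ThF_ker : Subgroup.lowerCentralSeries (⊤ : Subgroup (FreeGroup X)) 2 ≤ (ThF (X := X)).ker := by
  intro g hg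
  have := Subgroup.lowerCentralSeries.map (ThF (X := X)) 2 (Subgroup.mem_map_of_mem _ hg)
  rw [MM.lcs2] at this
  simpa using this

noncomputable def Th : N X →* MM X :=
  QuotientGroup.lift _ ThF ThF_ker

def pi1 : MM X →* Multiplicative (X →₀ ℤ) where
  toFun m := Multiplicative.ofAdd m.a
  map_one' := rfl
  map_mul' m n := by simp [MM.mul_def]

lemma Th_xb (x : X) : Th (xb x) = (⟨Finsupp.single x 1, 0⟩ : MM X) := by
  show Th (QuotientGroup.mk (FreeGroup.of x)) = _
  rw [Th, QuotientGroup.lift_mk]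
  simp [ThF]

lemma closure_range_xb : Subgroup.closure (Set.range (xb : X → N X)) = ⊤ := by
  have : Set.range (xb : X → N X) =
      (QuotientGroup.mk' (Subgroup.lowerCentralSeries (⊤ : Subgroup (FreeGroup X)) 2)) '' (Set.range FreeGroup.of) := by
    rw [← Set.range_comp]; rfl
  rw [this, ← MonoidHom.map_closure, FreeGroup.closure_range_of]
  exact Subgroup.map_top_of_surjective _ (QuotientGroup.mk'_surjective _)

noncomputable def Ab2 : Abelianization (N X) →* Multiplicative (X →₀ ℤ) :=
  Abelianization.lift ((pi1 (X := X)).comp Th)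

lemma Ab2_of (g : N X) : Ab2 (Abelianization.of g) = Multiplicative.ofAdd (Th g).a := rfl

noncomputable def Psi : (X →₀ ℤ) →+ Additive (Abelianization (N X)) :=
  Finsupp.liftAddHom fun x => zmultiplesHom _ (Additive.ofMul (Abelianization.of (xb x)))

lemma Psi_single (x : X) :
    Psi (Finsupp.single x 1) = Additive.ofMul (Abelianization.of (xb x)) := by
  rw [Psi, Finsupp.liftAddHom_apply_single]
  simp

lemma Psi_Ab2 (a : Abelianization (N X)) : ((Psi (Ab2 a).toAdd).toMul : Abelianization (N X)) = a := by
  induction a using QuotientGroup.induction_on with | H g => ?_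
  have hg : g ∈ Subgroup.closure (Set.range (xb : X → N X)) := by
    rw [closure_range_xb]; exact Subgroup.mem_top g
  induction hg using Subgroup.closure_induction with
  | mem g hgen =>
      obtain ⟨x, rfl⟩ := hgen
      show ((Psi (Ab2 (Abelianization.of (xb x))).toAdd).toMul : Abelianization (N X)) = _
      rw [Ab2_of, Th_xb]
      show ((Psi (Finsupp.single x 1)).toMul : Abelianization (N X)) = _
      rw [Psi_single]
      rfl
  | one =>
      show ((Psi (Ab2 (Abelianization.of (1 : N X))).toAdd).toMul : Abelianization (N X)) = _
      simp [map_one]; rfl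
  | mul g g' _ _ hg hg' =>
      show ((Psi (Ab2 (Abelianization.of (g * g'))).toAdd).toMul : Abelianization (N X)) = _
      rw [map_mul, map_mul]
      show ((Psi ((Ab2 (Abelianization.of g)).toAdd + (Ab2 (Abelianization.of g')).toAdd)).toMul :
        Abelianization (N X)) = _
      rw [map_add, toMul_add]
      have hg2 : Additive.toMul (Psi (Multiplicative.toAdd (Ab2 (Abelianization.of g)))) =
        Abelianization.of g := hg
      have hg2' : Additive.toMul (Psi (Multiplicative.toAdd (Ab2 (Abelianization.of g')))) =
        Abelianization.of g' := hg'
      rw [hg2, hg2', ← map_mul]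
      rfl
  | inv g _ hg =>
      show ((Psi (Ab2 (Abelianization.of g⁻¹)).toAdd).toMul : Abelianization (N X)) = _
      rw [map_inv, map_inv]
      show ((Psi (-(Ab2 (Abelianization.of g)).toAdd)).toMul : Abelianization (N X)) = _
      rw [map_neg, toMul_neg]
      have hg2 : Additive.toMul (Psi (Multiplicative.toAdd (Ab2 (Abelianization.of g)))) =
        Abelianization.of g := hg
      rw [hg2, ← map_inv]
      rfl

lemma Ab2_injective : Function.Injective (Ab2 (X := X)) := by
  intro a b hab
  rw [← Psi_Ab2 a, ← Psi_Ab2 b, hab]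

lemma mem_comm (a b : N X) : ⁅a, b⁆ ∈ commutator (N X) := by
  rw [commutator_eq_closure]
  exact Subgroup.subset_closure ⟨a, b, rfl⟩

lemma comm_mul_right (g h h' : N X) : ⁅g, h * h'⁆ = ⁅g, h⁆ * ⁅g, h'⁆ := by
  have hk : g * h' * g⁻¹ = ⁅g, h'⁆ * h' := by group
  have hc := comm_central ⁅g, h'⁆ (mem_comm g h') (g * h * g⁻¹)
  calc ⁅g, h * h'⁆ = (g * h * g⁻¹) * (g * h' * g⁻¹) * (h'⁻¹ * h⁻¹) := by group
    _ = (g * h * g⁻¹) * (⁅g, h'⁆ * h') * (h'⁻¹ * h⁻¹) := by rw [hk]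
    _ = (g * h * g⁻¹) * ⁅g, h'⁆ * h⁻¹ := by group
    _ = ⁅g, h'⁆ * (g * h * g⁻¹) * h⁻¹ := by rw [← hc.eq]
    _ = ⁅g, h'⁆ * ⁅g, h⁆ := by group
    _ = ⁅g, h⁆ * ⁅g, h'⁆ := (comm_central _ (mem_comm g h') _).eq

lemma comm_mul_left (g g' h : N X) : ⁅g * g', h⁆ = ⁅g, h⁆ * ⁅g', h⁆ := by
  rw [← commutatorElement_inv, comm_mul_right, mul_inv_rev, commutatorElement_inv,
    commutatorElement_inv]
  exact (comm_central _ (mem_comm g h) _).eq.symm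

lemma comm_inv_right (g h : N X) : ⁅g, h⁻¹⁆ = ⁅g, h⁆⁻¹ := by
  have h1 := comm_mul_right g h h⁻¹
  simp only [mul_inv_cancel, commutatorElement_one_right] at h1
  exact eq_inv_of_mul_eq_one_right h1.symm

lemma comm_inv_left (g h : N X) : ⁅g⁻¹, h⁆ = ⁅g, h⁆⁻¹ := by
  have h1 := comm_mul_left g g⁻¹ h
  simp only [mul_inv_cancel, commutatorElement_one_left] at h1
  exact eq_inv_of_mul_eq_one_right h1.symm

def genC : Subgroup (N X) :=
  Subgroup.closure {g | ∃ x y : X, x < y ∧ g = ⁅xb x, xb y⁆}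

lemma genC_le_comm : genC (X := X) ≤ commutator (N X) := by
  rw [genC, Subgroup.closure_le]
  rintro g ⟨x, y, _, rfl⟩
  exact mem_comm _ _

lemma comm_le_genC : commutator (N X) ≤ genC := by
  rw [commutator_def, Subgroup.commutator_le]
  intro g hgT h hhT
  clear hgT hhT
  have hg : g ∈ Subgroup.closure (Set.range (xb : X → N X)) := by
    rw [closure_range_xb]; exact Subgroup.mem_top g
  induction hg using Subgroup.closure_induction with
  | mem g hgen =>
      obtain ⟨x, rfl⟩ := hgen
      have hh : h ∈ Subgroup.closure (Set.range (xb : X → N X)) := by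
        rw [closure_range_xb]; exact Subgroup.mem_top h
      induction hh using Subgroup.closure_induction with
      | mem h hgen' =>
          obtain ⟨y, rfl⟩ := hgen'
          rcases lt_trichotomy x y with hxy | rfl | hxy
          · exact Subgroup.subset_closure ⟨x, y, hxy, rfl⟩
          · rw [commutatorElement_self]; exact one_mem _
          · rw [← commutatorElement_inv]
            exact inv_mem (Subgroup.subset_closure ⟨y, x, hxy, rfl⟩)
      | one => rw [commutatorElement_one_right]; exact one_mem _
      | mul a b _ _ ha hb => rw [comm_mul_right]; exact mul_mem ha hb
      | inv a _ ha => rw [comm_inv_right]; exact inv_mem ha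
  | one => rw [commutatorElement_one_left]; exact one_mem _
  | mul a b _ _ ha hb => rw [comm_mul_left]; exact mul_mem ha hb
  | inv a _ ha => rw [comm_inv_left]; exact inv_mem ha

lemma Th_a_comm (g : N X) (hg : g ∈ commutator (N X)) : (Th g).a = 0 := by
  have h1 : g ∈ ((pi1 (X := X)).comp Th).ker :=
    Abelianization.commutator_subset_ker ((pi1 (X := X)).comp Th) hg
  have h2 : Multiplicative.ofAdd (Th g).a = (1 : Multiplicative (X →₀ ℤ)) := h1
  simpa using h2

lemma MM.mk_zero_mul (s t : (X × X) →₀ ℤ) :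
    (⟨0, s⟩ : MM X) * ⟨0, t⟩ = ⟨0, s + t⟩ := by
  rw [MM.mul_def]; ext : 1 <;> simp

lemma MM.mk_zero_zpow (s : (X × X) →₀ ℤ) (n : ℤ) :
    (⟨0, s⟩ : MM X) ^ n = ⟨0, n • s⟩ := by
  have hnat : ∀ k : ℕ, (⟨0, s⟩ : MM X) ^ k = ⟨0, (k : ℤ) • s⟩ := by
    intro k
    induction k with
    | zero => simp [MM.one_def]
    | succ k ih =>
        rw [pow_succ, ih, MM.mk_zero_mul]
        ext : 1 <;> simp [add_smul]
  rcases n with k | k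
  · rw [Int.ofNat_eq_coe, zpow_natCast, hnat]
  · rw [zpow_negSucc, hnat, MM.inv_def]
    ext : 1 <;> simp [Int.negSucc_eq] <;> module

lemma Th_comm_gen {x y : X} (hxy : x < y) :
    Th ⁅xb x, xb y⁆ = (⟨0, Finsupp.single (x,y) 1⟩ : MM X) := by
  rw [map_commutatorElement, Th_xb, Th_xb, MM.comm_def]
  ext : 1
  · rfl
  · show Bmap (Finsupp.single x 1) (Finsupp.single y 1)
        - Bmap (Finsupp.single y 1) (Finsupp.single x 1) = _
    rw [Bmap_single_single, Bmap_single_single, if_pos hxy, if_neg (asymm hxy)]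
    simp

noncomputable instance genCComm : CommGroup ↥(genC (X := X)) :=
  { (inferInstance : Group ↥(genC (X := X))) with
    mul_comm := fun a b =>
      Subtype.ext ((comm_central a.1 (genC_le_comm a.2) b.1).eq) }

noncomputable def kap : ({q : X × X // q.1 < q.2} →₀ ℤ) →+ Additive ↥(genC (X := X)) :=
  Finsupp.liftAddHom fun q => zmultiplesHom _
    (Additive.ofMul (⟨⁅xb q.1.1, xb q.1.2⁆, Subgroup.subset_closure ⟨q.1.1, q.1.2, q.2, rfl⟩⟩ :
      ↥(genC (X := X))))

lemma kap_surj (e : N X) (he : e ∈ genC (X := X)) :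
    ∃ p, (((kap p).toMul : ↥(genC (X := X))) : N X) = e := by
  induction he using Subgroup.closure_induction with
  | mem g hgen =>
      obtain ⟨x, y, hxy, rfl⟩ := hgen
      refine ⟨Finsupp.single ⟨(x,y), hxy⟩ 1, ?_⟩
      rw [kap, Finsupp.liftAddHom_apply_single]
      simp
  | one => exact ⟨0, by simp⟩
  | mul a b _ _ ha hb =>
      obtain ⟨p, hp⟩ := ha
      obtain ⟨p', hp'⟩ := hb
      refine ⟨p + p', ?_⟩
      rw [map_add, toMul_add]
      push_cast [hp, hp']
      rfl
  | inv a _ ha =>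
      obtain ⟨p, hp⟩ := ha
      refine ⟨-p, ?_⟩
      rw [map_neg, toMul_neg]
      rw [← hp] ; rfl

lemma Th_kap (p : {q : X × X // q.1 < q.2} →₀ ℤ) :
    (Th (((kap p).toMul : ↥(genC (X := X))) : N X)).s =
      Finsupp.mapDomain Subtype.val p := by
  induction p using Finsupp.induction_linear with
  | zero => rw [map_zero]; simp [MM.one_def]
  | add p p' hp hp' =>
      rw [map_add, toMul_add]
      have hmul : ((((kap p).toMul * (kap p').toMul) : ↥(genC (X := X))) : N X) =
        (((kap p).toMul : ↥(genC (X := X))) : N X) *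
        (((kap p').toMul : ↥(genC (X := X))) : N X) := rfl
      rw [hmul, map_mul, Finsupp.mapDomain_add, ← hp, ← hp']
      rw [MM.mul_def]
      have ha1 : (Th (((kap p).toMul : ↥(genC (X := X))) : N X)).a = 0 :=
        Th_a_comm _ (genC_le_comm (X := X) ((kap p).toMul : ↥(genC (X := X))).2)
      rw [ha1]
      simp
  | single q n =>
      rw [kap, Finsupp.liftAddHom_apply_single, zmultiplesHom_apply]
      have hsmul : (((n • Additive.ofMul (⟨⁅xb q.1.1, xb q.1.2⁆,
          Subgroup.subset_closure ⟨q.1.1, q.1.2, q.2, rfl⟩⟩ :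
          ↥(genC (X := X)))).toMul : ↥(genC (X := X))) : N X) = ⁅xb q.1.1, xb q.1.2⁆ ^ n := by
        rw [toMul_zsmul]
        push_cast
        rfl
      rw [hsmul, map_zpow, Th_comm_gen q.2, MM.mk_zero_zpow, Finsupp.mapDomain_single]
      show n • Finsupp.single (q.1.1, q.1.2) (1:ℤ) = _
      rw [Finsupp.smul_single]
      simp

lemma comm_sq_eq_one (e : N X) (he : e ∈ commutator (N X)) (hsq : e * e = 1) : e = 1 := by
  obtain ⟨p, hp⟩ := kap_surj e (comm_le_genC he)
  have h1 : (Th (e * e)).s = 0 := by rw [hsq, map_one]; rfl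
  have ha : (Th e).a = 0 := Th_a_comm e he
  have h2 : (Th (e * e)).s = (Th e).s + (Th e).s := by
    rw [map_mul, MM.mul_def, ha]; simp
  have h3 : (Th e).s + (Th e).s = 0 := by rw [← h2, h1]
  have h4 : (Th e).s = 0 := by
    ext i
    have := DFunLike.congr_fun h3 i
    simp only [Finsupp.add_apply, Finsupp.coe_zero, Pi.zero_apply] at this ⊢
    omega
  have h5 : Finsupp.mapDomain (Subtype.val : {q : X × X // q.1 < q.2} → X × X) p = 0 := by
    rw [← Th_kap p, hp, h4]
  have h6 : p = 0 :=
    Finsupp.mapDomain_injective Subtype.val_injective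
      (by rw [h5, Finsupp.mapDomain_zero])
  rw [← hp, h6, map_zero]
  rfl

lemma Ab2_Psi (p : X →₀ ℤ) :
    Ab2 (((Psi p).toMul : Abelianization (N X))) = Multiplicative.ofAdd p := by
  induction p using Finsupp.induction_linear with
  | zero =>
      rw [map_zero]
      show Ab2 (1 : Abelianization (N X)) = _
      rw [map_one]
      rfl
  | add p p' hp hp' =>
      rw [map_add, toMul_add, map_mul, hp, hp']
      rfl
  | single x n =>
      rw [Psi, Finsupp.liftAddHom_apply_single, zmultiplesHom_apply]
      have : (((n • Additive.ofMul (Abelianization.of (xb x))).toMul) :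
          Abelianization (N X)) = (Abelianization.of (xb x)) ^ n := by
        rw [toMul_zsmul]; rfl
      rw [this, map_zpow, Ab2_of, Th_xb]
      show (Multiplicative.ofAdd (Finsupp.single x 1)) ^ n = _
      rw [← ofAdd_zsmul]
      simp

end Stmt2Aux

/-- If `z ∈ N \ N'` and `α` is an IA-automorphism of `N` with
`α² = τ_z`, then `α` is inner: `α = τ_u` for some `u ∈ N`. -/
theorem stmt2 (X : Type*) [Infinite X] (z : N X) (hz : z ∉ commutator (N X))
    (α : MulAut (N X)) (hα : IA α) (h : α ^ 2 = MulAut.conj z) :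
    ∃ u : N X, α = MulAut.conj u := by
  letI : LinearOrder X := @linearOrderOfSTO X WellOrderingRel _ (Classical.decRel _)
  -- the "IA-defect" of `α` lies in the commutator subgroup
  have hci : ∀ g : N X, g⁻¹ * α g ∈ commutator (N X) := by
    intro g
    have h1 : Abelianization.of (g⁻¹ * α g) = 1 := by
      rw [map_mul, map_inv, hα g]
      simp
    exact (QuotientGroup.eq_one_iff _).mp h1
  -- `α` fixes the commutator subgroup pointwise
  have hfix : ∀ q ∈ commutator (N X), α q = q := by
    intro q hq
    rw [commutator_eq_closure] at hq
    induction hq using Subgroup.closure_induction with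
    | mem q hq =>
        obtain ⟨a, b, rfl⟩ := hq
        have hda : α a = a * (a⁻¹ * α a) := by group
        have hdb : α b = b * (b⁻¹ * α b) := by group
        have h1 : (α : N X →* N X) ⁅a, b⁆ = ⁅α a, α b⁆ := map_commutatorElement _ a b
        have h2 : ⁅α a, α b⁆ = ⁅a, b⁆ := by
          rw [hda, hdb, Stmt2Aux.comm_mul_left, Stmt2Aux.comm_mul_right]
          have e1 : ⁅a, b⁻¹ * α b⁆ = 1 :=
            (Stmt2Aux.comm_central _ (hci b) a).symm.commutator_eq
          have e2 : ⁅a⁻¹ * α a, b * (b⁻¹ * α b)⁆ = 1 :=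
            (Stmt2Aux.comm_central _ (hci a) _).commutator_eq
          rw [e1, e2]
          simp
        exact h1.trans h2
    | one => exact map_one α
    | mul a b _ _ ha hb => rw [map_mul, ha, hb]
    | inv a _ ha => rw [map_inv, ha]
  -- the squared defect is a conjugation commutator
  have hsq : ∀ g : N X, (g⁻¹ * α g) * (g⁻¹ * α g) = g⁻¹ * z * g * z⁻¹ := by
    intro g
    have h1 : α (α g) = z * g * z⁻¹ := by
      have := congrArg (fun φ : MulAut (N X) => φ g) h
      simpa [sq, MulAut.conj_apply] using this
    have h2 : α (α g) = α g * (g⁻¹ * α g) := by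
      conv_lhs => rw [show α g = g * (g⁻¹ * α g) from by group]
      rw [map_mul, hfix _ (hci g)]
    rw [h2] at h1
    calc (g⁻¹ * α g) * (g⁻¹ * α g) = g⁻¹ * (α g * (g⁻¹ * α g)) := by group
      _ = g⁻¹ * (z * g * z⁻¹) := by rw [h1]
      _ = g⁻¹ * z * g * z⁻¹ := by group
  -- all abelianized coordinates of `z` are even
  have hEven : ∀ w : X, (2:ℤ) ∣ (Stmt2Aux.Th z).a w := by
    intro w
    obtain ⟨y, hyw⟩ := exists_ne w
    set g := xb y with hg
    set e := g⁻¹ * α g with he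
    have hcomm : e ∈ commutator (N X) := hci g
    have hThe : (Stmt2Aux.Th e).a = 0 := Stmt2Aux.Th_a_comm e hcomm
    have hprod : g⁻¹ * z * g * z⁻¹ = ⁅g⁻¹, z⁆ := by
      rw [commutatorElement_def]; group
    have h1 : Stmt2Aux.Th (e * e) = Stmt2Aux.Th ⁅g⁻¹, z⁆ := by rw [hsq g, hprod]
    have h2 : (Stmt2Aux.Th (e * e)).s = (Stmt2Aux.Th e).s + (Stmt2Aux.Th e).s := by
      rw [map_mul, Stmt2Aux.MM.mul_def, hThe]; simp
    have h3 : (Stmt2Aux.Th ⁅g⁻¹, z⁆).s =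
        Stmt2Aux.Bmap (Stmt2Aux.Th z).a (Finsupp.single y 1)
          - Stmt2Aux.Bmap (Finsupp.single y 1) (Stmt2Aux.Th z).a := by
      rw [map_commutatorElement, Stmt2Aux.MM.comm_def]
      show Stmt2Aux.Bmap (Stmt2Aux.Th g⁻¹).a (Stmt2Aux.Th z).a
        - Stmt2Aux.Bmap (Stmt2Aux.Th z).a (Stmt2Aux.Th g⁻¹).a = _
      rw [map_inv, Stmt2Aux.MM.inv_def]
      show Stmt2Aux.Bmap (-(Stmt2Aux.Th g).a) (Stmt2Aux.Th z).a
        - Stmt2Aux.Bmap (Stmt2Aux.Th z).a (-(Stmt2Aux.Th g).a) = _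
      rw [hg, Stmt2Aux.Th_xb]
      show Stmt2Aux.Bmap (-(Finsupp.single y 1)) (Stmt2Aux.Th z).a
        - Stmt2Aux.Bmap (Stmt2Aux.Th z).a (-(Finsupp.single y 1)) = _
      rw [map_neg, LinearMap.neg_apply, map_neg]
      abel
    have h4 : (Stmt2Aux.Th e).s + (Stmt2Aux.Th e).s =
        Stmt2Aux.Bmap (Stmt2Aux.Th z).a (Finsupp.single y 1)
          - Stmt2Aux.Bmap (Finsupp.single y 1) (Stmt2Aux.Th z).a := by
      rw [← h2, h1, h3]
    rcases lt_or_gt_of_ne (Ne.symm hyw) with hwy | hwy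
    · have := DFunLike.congr_fun h4 (w, y)
      rw [Finsupp.add_apply, Finsupp.sub_apply, Stmt2Aux.Bmap_apply_apply,
        Stmt2Aux.Bmap_apply_apply, if_pos hwy, if_pos hwy] at this
      simp only [Finsupp.single_apply, hyw, if_true, if_false, reduceIte] at this
      refine ⟨(Stmt2Aux.Th e).s (w, y), ?_⟩
      omega
    · have := DFunLike.congr_fun h4 (y, w)
      rw [Finsupp.add_apply, Finsupp.sub_apply, Stmt2Aux.Bmap_apply_apply,
        Stmt2Aux.Bmap_apply_apply, if_pos hwy, if_pos hwy] at this
      simp only [Finsupp.single_apply, hyw, if_true, if_false, reduceIte] at this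
      refine ⟨-(Stmt2Aux.Th e).s (y, w), ?_⟩
      omega
  -- a square root of `z` modulo the commutator subgroup
  set tz : X →₀ ℤ := Finsupp.mapRange (fun n => n / 2) (by simp) (Stmt2Aux.Th z).a
    with htzdef
  have htz : (Stmt2Aux.Th z).a = tz + tz := by
    ext w
    rw [Finsupp.add_apply, htzdef, Finsupp.mapRange_apply]
    have := hEven w
    omega
  obtain ⟨u, hu⟩ := QuotientGroup.mk_surjective (s := commutator (N X))
    (((Stmt2Aux.Psi tz).toMul : Abelianization (N X)))
  have hu' : Abelianization.of u = ((Stmt2Aux.Psi tz).toMul : Abelianization (N X)) := hu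
  have hq : z * (u * u)⁻¹ ∈ commutator (N X) := by
    have hou : Stmt2Aux.Ab2 (Abelianization.of u) = Multiplicative.ofAdd tz := by
      rw [hu', Stmt2Aux.Ab2_Psi]
    have h1 : Stmt2Aux.Ab2 (Abelianization.of (z * (u * u)⁻¹)) = 1 := by
      have hexp : Abelianization.of (z * (u * u)⁻¹) = Abelianization.of z *
          (Abelianization.of u * Abelianization.of u)⁻¹ := by
        rw [map_mul, map_inv, map_mul]
      rw [hexp, map_mul, map_inv, map_mul, hou, Stmt2Aux.Ab2_of, htz, ofAdd_add]
      group
    have h2 : Abelianization.of (z * (u * u)⁻¹) = 1 :=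
      Stmt2Aux.Ab2_injective (by rw [h1, map_one])
    exact (QuotientGroup.eq_one_iff _).mp h2
  -- conclude
  refine ⟨u, ?_⟩
  ext g
  show α g = u * g * u⁻¹
  set cg := g⁻¹ * α g with hcg
  set k := ⁅u, g⁆ with hk
  have hkmem : k ∈ commutator (N X) := Stmt2Aux.mem_comm u g
  have hq' : z = (z * (u * u)⁻¹) * (u * u) := by group
  have hckey : cg * cg = k * k := by
    have hcent := Stmt2Aux.comm_central _ hq
    calc cg * cg = g⁻¹ * z * g * z⁻¹ := hsq g
      _ = g⁻¹ * ((z * (u * u)⁻¹) * (u * u)) * g * ((z * (u * u)⁻¹) * (u * u))⁻¹ := by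
          rw [← hq']
      _ = (g⁻¹ * (z * (u * u)⁻¹)) * ((u * u) * g * (u * u)⁻¹ * (z * (u * u)⁻¹)⁻¹) := by
          group
      _ = ((z * (u * u)⁻¹) * g⁻¹) * ((u * u) * g * (u * u)⁻¹ * (z * (u * u)⁻¹)⁻¹) := by
          rw [(hcent g⁻¹).symm.eq]
      _ = ((z * (u * u)⁻¹) * (g⁻¹ * (u * u) * g * (u * u)⁻¹)) * (z * (u * u)⁻¹)⁻¹ := by
          group
      _ = ((g⁻¹ * (u * u) * g * (u * u)⁻¹) * (z * (u * u)⁻¹)) * (z * (u * u)⁻¹)⁻¹ := by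
          rw [(hcent (g⁻¹ * (u * u) * g * (u * u)⁻¹)).eq]
      _ = g⁻¹ * (u * u) * g * (u * u)⁻¹ := by group
      _ = ⁅g⁻¹, u * u⁆ := by rw [commutatorElement_def]; group
      _ = ⁅u * u, g⁆ := by rw [Stmt2Aux.comm_inv_left, commutatorElement_inv]
      _ = k * k := Stmt2Aux.comm_mul_left u u g
  have hesq : (cg * k⁻¹) * (cg * k⁻¹) = 1 := by
    calc (cg * k⁻¹) * (cg * k⁻¹) = cg * (k⁻¹ * cg) * k⁻¹ := by group
      _ = cg * (cg * k⁻¹) * k⁻¹ := by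
          rw [(Stmt2Aux.comm_central _ (inv_mem hkmem) cg).eq]
      _ = (cg * cg) * (k⁻¹ * k⁻¹) := by group
      _ = (k * k) * (k⁻¹ * k⁻¹) := by rw [hckey]
      _ = 1 := by group
  have hemem : cg * k⁻¹ ∈ commutator (N X) := mul_mem (hci g) (inv_mem hkmem)
  have hone : cg * k⁻¹ = 1 := Stmt2Aux.comm_sq_eq_one _ hemem hesq
  have hck : cg = k := by
    have := congrArg (· * k) hone
    simpa using this
  have : α g = g * k := by
    rw [← hck, hcg]
    group
  rw [this, ← (Stmt2Aux.comm_central k hkmem g).eq, hk, commutatorElement_def]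
  group
end

section
/- Let Π = Sym(X) be the symmetric group of an infinite set X, and let U, V be disjoint subsets of X, each of cardinality strictly less than the cardinality of X. Then Π is generated by the union of the pointwise stabilizers Π_(U) and Π_(V); that is, the subgroup generated by Π_(U) ∪ Π_(V) is all of Sym(X). -/
open FreeNilp

open Cardinal Set

/-- If `U, V` are disjoint subsets of an infinite set `X`, both of
cardinality `< |X|`, then `Sym(X)` is generated by the pointwise stabilizers of `U`
and of `V`. -/
theorem stmt12 (X : Type*) [Infinite X] (U V : Set X) (hd : Disjoint U V)
    (hU : Cardinal.mk U < Cardinal.mk X) (hV : Cardinal.mk V < Cardinal.mk X) :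
    Subgroup.closure ({π : Equiv.Perm X | ∀ u ∈ U, π u = u} ∪
      {π : Equiv.Perm X | ∀ v ∈ V, π v = v}) = ⊤ := by
  classical
  rw [eq_top_iff]
  rintro π -
  have hX : (ℵ₀ : Cardinal) ≤ #X := Cardinal.aleph0_le_mk X
  -- small set to avoid
  set S₀ : Set X := U ∪ (V ∪ ⇑π ⁻¹' V) with hS₀def
  have hPV : #(⇑π ⁻¹' V) ≤ #V := Cardinal.mk_preimage_of_injective _ _ π.injective
  have hS₀ : #S₀ < #X := by
    refine lt_of_le_of_lt (Cardinal.mk_union_le _ _) ?_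
    refine Cardinal.add_lt_of_lt hX hU ?_
    exact lt_of_le_of_lt (Cardinal.mk_union_le _ _)
      (Cardinal.add_lt_of_lt hX hV (lt_of_le_of_lt hPV hV))
  -- a fresh copy W of U inside the complement of S₀
  have hcompl : #(S₀ᶜ : Set X) = #X := Cardinal.mk_compl_of_infinite S₀ hS₀
  have hUle : #U ≤ #(S₀ᶜ : Set X) := by rw [hcompl]; exact hU.le
  obtain ⟨f⟩ := (Cardinal.le_def _ _).mp hUle
  let f' : U → X := fun u => (f u : X)
  have hf'inj : Function.Injective f' := fun a b h =>
    f.injective (Subtype.ext h)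
  set W : Set X := Set.range f' with hWdef
  have hWc : W ⊆ S₀ᶜ := by rintro _ ⟨u, rfl⟩; exact (f u).2
  have hUW : Disjoint U W := by
    refine Set.disjoint_left.mpr fun x hxU hxW => ?_
    exact (hWc hxW) (Or.inl hxU)
  have hVW : Disjoint V W := by
    refine Set.disjoint_left.mpr fun x hxV hxW => ?_
    exact (hWc hxW) (Or.inr (Or.inl hxV))
  have hWPV : Disjoint W (⇑π ⁻¹' V) := by
    refine Set.disjoint_left.mpr fun x hxW hx => ?_
    exact (hWc hxW) (Or.inr (Or.inr hx))
  let e0 : U ≃ W := Equiv.ofInjective f' hf'inj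
  -- the involution β₁ swapping U and W
  let g : X → X := fun x =>
    if h : x ∈ U then (e0 ⟨x, h⟩ : X)
    else if h : x ∈ W then (e0.symm ⟨x, h⟩ : X) else x
  have hgU : ∀ x (h : x ∈ U), g x = (e0 ⟨x, h⟩ : X) := by
    intro x h; simp only [g, dif_pos h]
  have hgW : ∀ x (h : x ∈ W), g x = (e0.symm ⟨x, h⟩ : X) := by
    intro x h
    have hxU : x ∉ U := Set.disjoint_right.mp hUW h
    simp only [g, dif_neg hxU, dif_pos h]
  have hgid : ∀ x, x ∉ U → x ∉ W → g x = x := by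
    intro x h1 h2; simp only [g, dif_neg h1, dif_neg h2]
  have hg : Function.Involutive g := by
    intro x
    by_cases hx : x ∈ U
    · rw [hgU x hx]
      have hmem : ((e0 ⟨x, hx⟩ : W) : X) ∈ W := (e0 ⟨x, hx⟩).2
      rw [hgW _ hmem]
      simp
    · by_cases hx' : x ∈ W
      · rw [hgW x hx']
        have hmem : ((e0.symm ⟨x, hx'⟩ : U) : X) ∈ U := (e0.symm ⟨x, hx'⟩).2
        rw [hgU _ hmem]
        simp
      · rw [hgid x hx hx', hgid x hx hx']
  let β₁ : Equiv.Perm X := hg.toPerm g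
  have hβ₁ : ∀ x, β₁ x = g x := fun _ => rfl
  have hβ₁V : ∀ v ∈ V, β₁ v = v := by
    intro v hv
    rw [hβ₁]
    exact hgid v (Set.disjoint_right.mp hd hv) (Set.disjoint_left.mp hVW hv)
  -- π₁ = π ∘ β₁
  let π₁ : Equiv.Perm X := π * β₁
  set A : Set X := ⇑π₁ ⁻¹' V with hAdef
  have hAU : Disjoint A U := by
    refine Set.disjoint_left.mpr fun x hxA hxU => ?_
    have h1 : β₁ x ∈ W := by
      rw [hβ₁, hgU x hxU]; exact (e0 ⟨x, hxU⟩).2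
    have h2 : π (β₁ x) ∈ V := hxA
    exact Set.disjoint_left.mp hWPV h1 h2
  have hA : #A ≤ #V := Cardinal.mk_preimage_of_injective _ _ π₁.injective
  have hAUcard : #(A ∪ U : Set X) < #X :=
    lt_of_le_of_lt (Cardinal.mk_union_le _ _)
      (Cardinal.add_lt_of_lt hX (lt_of_le_of_lt hA hV) hU)
  -- β₂ : fixes U pointwise, equals π₁ on A
  let F : (A ∪ U : Set X) → X := fun x => if x.1 ∈ A then π₁ x.1 else x.1
  have hFA : ∀ (x : (A ∪ U : Set X)), x.1 ∈ A → F x = π₁ x.1 := by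
    intro x hx; simp only [F, if_pos hx]
  have hFU : ∀ (x : (A ∪ U : Set X)), x.1 ∉ A → F x = x.1 := by
    intro x hx; simp only [F, if_neg hx]
  have hFinj : Function.Injective F := by
    rintro ⟨x, hx⟩ ⟨y, hy⟩ hxy
    by_cases hxA : x ∈ A <;> by_cases hyA : y ∈ A
    · rw [hFA _ hxA, hFA _ hyA] at hxy
      exact Subtype.ext (π₁.injective hxy)
    · rw [hFA _ hxA, hFU _ hyA] at hxy
      have hyU : y ∈ U := hy.resolve_left hyA
      have : π₁ x ∈ V := hxA
      rw [hxy] at this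
      exact absurd hyU (Set.disjoint_right.mp hd this)
    · rw [hFU _ hxA, hFA _ hyA] at hxy
      have hxU : x ∈ U := hx.resolve_left hxA
      have : π₁ y ∈ V := hyA
      rw [← hxy] at this
      exact absurd hxU (Set.disjoint_right.mp hd this)
    · rw [hFU _ hxA, hFU _ hyA] at hxy
      exact Subtype.ext hxy
  obtain ⟨β₂, hβ₂⟩ :=
    Cardinal.extend_function_of_lt ⟨F, hFinj⟩ hAUcard ⟨Equiv.refl X⟩
  have hβ₂A : ∀ x ∈ A, β₂ x = π₁ x := by
    intro x hx
    exact (hβ₂ ⟨x, Or.inl hx⟩).trans (hFA ⟨x, Or.inl hx⟩ hx)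
  have hβ₂U : ∀ u ∈ U, β₂ u = u := by
    intro u hu
    have hnA : u ∉ A := Set.disjoint_right.mp hAU hu
    exact (hβ₂ ⟨u, Or.inr hu⟩).trans (hFU ⟨u, Or.inr hu⟩ hnA)
  -- α fixes V pointwise
  let α : Equiv.Perm X := π₁ * β₂⁻¹
  have hαV : ∀ v ∈ V, α v = v := by
    intro v hv
    have haA : π₁.symm v ∈ A := by
      simp only [hAdef, Set.mem_preimage, Equiv.apply_symm_apply]; exact hv
    have h1 : β₂ (π₁.symm v) = v := by
      rw [hβ₂A _ haA, Equiv.apply_symm_apply]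
    have h2 : β₂⁻¹ v = π₁.symm v := by
      conv_lhs => rw [← h1]
      exact β₂.symm_apply_apply _
    show π₁ (β₂⁻¹ v) = v
    rw [h2, Equiv.apply_symm_apply]
  -- assemble
  have hdecomp : π = α * β₂ * β₁⁻¹ := by
    simp only [α, π₁]
    group
  have hmemα : α ∈ ({π : Equiv.Perm X | ∀ u ∈ U, π u = u} ∪
      {π : Equiv.Perm X | ∀ v ∈ V, π v = v}) := Or.inr hαV
  have hmemβ₂ : β₂ ∈ ({π : Equiv.Perm X | ∀ u ∈ U, π u = u} ∪
      {π : Equiv.Perm X | ∀ v ∈ V, π v = v}) := Or.inl hβ₂U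
  have hmemβ₁ : β₁ ∈ ({π : Equiv.Perm X | ∀ u ∈ U, π u = u} ∪
      {π : Equiv.Perm X | ∀ v ∈ V, π v = v}) := Or.inr hβ₁V
  rw [hdecomp]
  exact mul_mem (mul_mem (Subgroup.subset_closure hmemα)
    (Subgroup.subset_closure hmemβ₂))
    (inv_mem (Subgroup.subset_closure hmemβ₁))
end
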